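/- For every real eccentricity e with 0 ≤ e < 1 and all real constants A and B, the integral over one period of the eccentric anomaly satisfies ∫₀^{2π} [A·(cos E − e) + B·sin E] / (1 − e·cos E)² dE = 0. -/

import Mathlib

open Real intervalIntegral

/-- For `0 ≤ e < 1` and any real constants `A, B`, the integral over one
period of the eccentric anomaly of `[A(cos E − e) + B sin E]/(1 − e cos E)²` vanishes. -/
theorem integral_first_order_term_vanishes (e A B : ℝ) (he0 : 0 ≤ e) (he1 : e < 1) :
    ∫ E in (0 : ℝ)..(2 * Real.pi),
      (A * (Real.cos E - e) + B * Real.sin E) / (1 - e * Real.cos E) ^ 2 = 0 := by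
  have hpos : ∀ x : ℝ, 0 < 1 - e * Real.cos x := by
    intro x
    have h1 : e * Real.cos x ≤ e * 1 := by
      have := Real.cos_le_one x
      nlinarith
    linarith
  have hne : ∀ x : ℝ, 1 - e * Real.cos x ≠ 0 := fun x => ne_of_gt (hpos x)
  rcases eq_or_ne e 0 with rfl | he
  · simp only [zero_mul, sub_zero, one_pow, div_one]
    have hi1 : IntervalIntegrable (fun x => A * (Real.cos x - 0)) MeasureTheory.volume 0 (2*Real.pi) := by
      apply Continuous.intervalIntegrable; continuity
    have hi2 : IntervalIntegrable (fun x => B * Real.sin x) MeasureTheory.volume 0 (2*Real.pi) := by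
      apply Continuous.intervalIntegrable; continuity
    have hi1' : IntervalIntegrable (fun x => A * Real.cos x) MeasureTheory.volume 0 (2*Real.pi) := by
      simp only [sub_zero] at hi1; exact hi1
    rw [show (fun E : ℝ => A * Real.cos E + B * Real.sin E) = fun E => A * Real.cos E + B * Real.sin E from rfl,
      intervalIntegral.integral_add hi1' hi2]
    simp [intervalIntegral.integral_const_mul, Real.sin_two_pi, Real.cos_two_pi]
  · set F : ℝ → ℝ := fun x => A * Real.sin x / (1 - e * Real.cos x)
      - B / (e * (1 - e * Real.cos x)) with hF
    have hderiv : ∀ x : ℝ, HasDerivAt F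
        ((A * (Real.cos x - e) + B * Real.sin x) / (1 - e * Real.cos x) ^ 2) x := by
      intro x
      have h1 : HasDerivAt (fun x => 1 - e * Real.cos x) (e * Real.sin x) x := by
        have := ((Real.hasDerivAt_cos x).const_mul e).const_sub 1
        simpa [mul_comm] using this
      have h2 : HasDerivAt (fun x => A * Real.sin x / (1 - e * Real.cos x))
          ((A * Real.cos x * (1 - e * Real.cos x) - A * Real.sin x * (e * Real.sin x))
            / (1 - e * Real.cos x) ^ 2) x :=
        ((Real.hasDerivAt_sin x).const_mul A).div h1 (hne x)
      have h3 : HasDerivAt (fun x => e * (1 - e * Real.cos x)) (e * (e * Real.sin x)) x :=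
        h1.const_mul e
      have h3' : e * (1 - e * Real.cos x) ≠ 0 := mul_ne_zero he (hne x)
      have h4 : HasDerivAt (fun x => B / (e * (1 - e * Real.cos x)))
          ((0 * (e * (1 - e * Real.cos x)) - B * (e * (e * Real.sin x)))
            / (e * (1 - e * Real.cos x)) ^ 2) x :=
        (hasDerivAt_const x B).div h3 h3'
      have h5 := h2.sub h4
      refine h5.congr_deriv (Eq.symm ?_)
      have hs : Real.sin x ^ 2 = 1 - Real.cos x ^ 2 := Real.sin_sq x
      rw [div_sub_div _ _ (pow_ne_zero 2 (hne x)) (pow_ne_zero 2 h3'),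
        div_eq_div_iff (pow_ne_zero 2 (hne x)) (mul_ne_zero (pow_ne_zero 2 (hne x)) (pow_ne_zero 2 h3'))]
      linear_combination (A * e^3 * (1 - e * Real.cos x)^4) * hs
    have hcont : Continuous fun x : ℝ =>
        (A * (Real.cos x - e) + B * Real.sin x) / (1 - e * Real.cos x) ^ 2 := by
      apply Continuous.div
      · continuity
      · continuity
      · intro x; exact pow_ne_zero 2 (hne x)
    rw [intervalIntegral.integral_eq_sub_of_hasDerivAt (fun x _ => hderiv x)
      (hcont.intervalIntegrable 0 (2*Real.pi))]
    simp [hF, Real.sin_two_pi, Real.cos_two_pi]
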